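/- Let U ⊆ ℝ_t × ℝ²_x be open, let h be C¹ with h > 0 and v¹, v² be C² on U, and suppose they solve the 2D rotating shallow water system B h = −h div v, B v¹ = v² − ∂₁h, B v² = −v¹ − ∂₂h on U. Then the specific vorticity ζ = ω e^{−ρ}, where ρ = ln h and ω = ∂₁v² − ∂₂v¹, satisfies B ζ = −e^{−ρ} div v on U. -/

import Mathlib

/-- Partial derivative in the `i`-th coordinate direction of spacetime
`ℝ_t × ℝ²_x ≃ (Fin 3 → ℝ)`, coordinates `(x⁰, x¹, x²) = (t, x₁, x₂)`. -/
noncomputable def pd (i : Fin 3) (f : (Fin 3 → ℝ) → ℝ) (x : Fin 3 → ℝ) : ℝ :=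
  fderiv ℝ f x (Pi.single i 1)

/-- Material derivative `B = ∂ₜ + v¹∂₁ + v²∂₂`. -/
noncomputable def matD (v1 v2 f : (Fin 3 → ℝ) → ℝ) (x : Fin 3 → ℝ) : ℝ :=
  pd 0 f x + v1 x * pd 1 f x + v2 x * pd 2 f x

open Filter Topology

lemma pd_congr {i : Fin 3} {f g : (Fin 3 → ℝ) → ℝ} {x : Fin 3 → ℝ}
    (h : f =ᶠ[𝓝 x] g) : pd i f x = pd i g x := by
  unfold pd; rw [h.fderiv_eq]

lemma pd_sub {i : Fin 3} {f g : (Fin 3 → ℝ) → ℝ} {x : Fin 3 → ℝ}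
    (hf : DifferentiableAt ℝ f x) (hg : DifferentiableAt ℝ g x) :
    pd i (fun y => f y - g y) x = pd i f x - pd i g x := by
  unfold pd; rw [fderiv_fun_sub hf hg]; simp

lemma pd_neg {i : Fin 3} {f : (Fin 3 → ℝ) → ℝ} {x : Fin 3 → ℝ} :
    pd i (fun y => -f y) x = -pd i f x := by
  unfold pd; rw [fderiv_fun_neg]; simp

lemma pd_mul {i : Fin 3} {f g : (Fin 3 → ℝ) → ℝ} {x : Fin 3 → ℝ}
    (hf : DifferentiableAt ℝ f x) (hg : DifferentiableAt ℝ g x) :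
    pd i (fun y => f y * g y) x = f x * pd i g x + g x * pd i f x := by
  unfold pd; rw [fderiv_fun_mul hf hg]; simp

lemma pd_inv {i : Fin 3} {f : (Fin 3 → ℝ) → ℝ} {x : Fin 3 → ℝ}
    (hf : DifferentiableAt ℝ f x) (h0 : f x ≠ 0) :
    pd i (fun y => (f y)⁻¹) x = -(pd i f x) / (f x)^2 := by
  unfold pd
  have : (fun y => (f y)⁻¹) = (fun t : ℝ => t⁻¹) ∘ f := rfl
  rw [this, fderiv_comp x (differentiableAt_inv h0) hf, fderiv_inv]
  simp [div_eq_mul_inv]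
  try ring

lemma pd_differentiableAt {i : Fin 3} {f : (Fin 3 → ℝ) → ℝ} {x : Fin 3 → ℝ}
    (hf : ContDiffAt ℝ 2 f x) : DifferentiableAt ℝ (pd i f) x := by
  have h1 : ContDiffAt ℝ 1 (fderiv ℝ f) x := hf.fderiv_right (by norm_num)
  have h2 := h1.differentiableAt one_ne_zero
  exact h2.clm_apply (differentiableAt_const _)

lemma pd_pd_eq {i j : Fin 3} {f : (Fin 3 → ℝ) → ℝ} {x : Fin 3 → ℝ}
    (hf' : DifferentiableAt ℝ (fderiv ℝ f) x) :
    pd i (pd j f) x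
      = fderiv ℝ (fderiv ℝ f) x (Pi.single i 1) (Pi.single j 1) := by
  show fderiv ℝ (fun y => fderiv ℝ f y (Pi.single j 1)) x (Pi.single i 1) = _
  rw [fderiv_clm_apply hf' (differentiableAt_const _)]
  simp

lemma pd_clairaut {i j : Fin 3} {f : (Fin 3 → ℝ) → ℝ} {x : Fin 3 → ℝ}
    (hf : ∀ᶠ y in 𝓝 x, DifferentiableAt ℝ f y)
    (hf' : DifferentiableAt ℝ (fderiv ℝ f) x) :
    pd i (pd j f) x = pd j (pd i f) x := by
  rw [pd_pd_eq hf', pd_pd_eq hf']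
  exact second_derivative_symmetric_of_eventually
    (hf.mono fun y hy => hy.hasFDerivAt) hf'.hasFDerivAt _ _

lemma clm_rep (L : (Fin 3 → ℝ) →L[ℝ] ℝ) (w : Fin 3 → ℝ) :
    L w = w 0 * L (Pi.single 0 1) + w 1 * L (Pi.single 1 1) + w 2 * L (Pi.single 2 1) := by
  have : w = w 0 • (Pi.single 0 1 : Fin 3 → ℝ) + w 1 • (Pi.single 1 1 : Fin 3 → ℝ)
      + w 2 • (Pi.single 2 1 : Fin 3 → ℝ) := by
    ext i; fin_cases i <;> simp [Pi.single_apply]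
  rw [this]
  simp

/-- For a `C¹` positive height `h` and `C²` velocity `(v¹, v²)` solving the 2D rotating
shallow water system `B h = −h div v`, `B v¹ = v² − ∂₁h`, `B v² = −v¹ − ∂₂h` on an open
set `U`, the specific vorticity `ζ = ω e^{−ρ}` (with `ρ = ln h`, `ω = ∂₁v² − ∂₂v¹`)
satisfies `B ζ = −e^{−ρ} div v` on `U`. -/
theorem specific_vorticity_transport
    (U : Set (Fin 3 → ℝ)) (hU : IsOpen U)
    (h v1 v2 : (Fin 3 → ℝ) → ℝ)
    (hh : ContDiffOn ℝ 1 h U)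
    (hv1 : ContDiffOn ℝ 2 v1 U) (hv2 : ContDiffOn ℝ 2 v2 U)
    (hpos : ∀ x ∈ U, 0 < h x)
    (hmass : ∀ x ∈ U, matD v1 v2 h x = -(h x) * (pd 1 v1 x + pd 2 v2 x))
    (hmom1 : ∀ x ∈ U, matD v1 v2 v1 x = v2 x - pd 1 h x)
    (hmom2 : ∀ x ∈ U, matD v1 v2 v2 x = -v1 x - pd 2 h x) :
    ∀ x ∈ U,
      matD v1 v2
        (fun y => (pd 1 v2 y - pd 2 v1 y) * Real.exp (-(Real.log (h y)))) x
        = -(Real.exp (-(Real.log (h x)))) * (pd 1 v1 x + pd 2 v2 x) := by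
  intro x hx
  have nU : ∀ y ∈ U, U ∈ 𝓝 y := fun y hy => hU.mem_nhds hy
  have memU : U ∈ 𝓝 x := nU x hx
  have hne : h x ≠ 0 := (hpos x hx).ne'
  -- differentiability facts
  have dv1 : ∀ y ∈ U, DifferentiableAt ℝ v1 y :=
    fun y hy => (hv1.contDiffAt (nU y hy)).differentiableAt two_ne_zero
  have dv2 : ∀ y ∈ U, DifferentiableAt ℝ v2 y :=
    fun y hy => (hv2.contDiffAt (nU y hy)).differentiableAt two_ne_zero
  have dh : ∀ y ∈ U, DifferentiableAt ℝ h y :=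
    fun y hy => (hh.contDiffAt (nU y hy)).differentiableAt one_ne_zero
  have dpv1 : ∀ (i : Fin 3), ∀ y ∈ U, DifferentiableAt ℝ (pd i v1) y :=
    fun i y hy => pd_differentiableAt (hv1.contDiffAt (nU y hy))
  have dpv2 : ∀ (i : Fin 3), ∀ y ∈ U, DifferentiableAt ℝ (pd i v2) y :=
    fun i y hy => pd_differentiableAt (hv2.contDiffAt (nU y hy))
  -- the equations, solved for the partial derivatives of h
  have e1 : ∀ y ∈ U, pd 1 h y
      = v2 y - pd 0 v1 y - v1 y * pd 1 v1 y - v2 y * pd 2 v1 y := by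
    intro y hy; have := hmom1 y hy; unfold matD at this; linarith
  have e2 : ∀ y ∈ U, pd 2 h y
      = -v1 y - pd 0 v2 y - v1 y * pd 1 v2 y - v2 y * pd 2 v2 y := by
    intro y hy; have := hmom2 y hy; unfold matD at this; linarith
  have e0 : ∀ y ∈ U, pd 0 h y
      = -(h y) * (pd 1 v1 y + pd 2 v2 y) - v1 y * pd 1 h y - v2 y * pd 2 h y := by
    intro y hy; have := hmass y hy; unfold matD at this; linarith
  -- differentiability of pd 1 h, pd 2 h at x via the momentum equations
  have dG1 : ∀ y ∈ U, DifferentiableAt ℝ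
      (fun y => v2 y - pd 0 v1 y - v1 y * pd 1 v1 y - v2 y * pd 2 v1 y) y :=
    fun y hy => (((dv2 y hy).sub (dpv1 0 y hy)).sub
      ((dv1 y hy).mul (dpv1 1 y hy))).sub ((dv2 y hy).mul (dpv1 2 y hy))
  have dG2 : ∀ y ∈ U, DifferentiableAt ℝ
      (fun y => -v1 y - pd 0 v2 y - v1 y * pd 1 v2 y - v2 y * pd 2 v2 y) y :=
    fun y hy => (((dv1 y hy).neg.sub (dpv2 0 y hy)).sub
      ((dv1 y hy).mul (dpv2 1 y hy))).sub ((dv2 y hy).mul (dpv2 2 y hy))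
  have ev1 : pd 1 h =ᶠ[𝓝 x]
      (fun y => v2 y - pd 0 v1 y - v1 y * pd 1 v1 y - v2 y * pd 2 v1 y) :=
    eventually_of_mem memU e1
  have ev2 : pd 2 h =ᶠ[𝓝 x]
      (fun y => -v1 y - pd 0 v2 y - v1 y * pd 1 v2 y - v2 y * pd 2 v2 y) :=
    eventually_of_mem memU e2
  have dph1 : DifferentiableAt ℝ (pd 1 h) x :=
    (dG1 x hx).congr_of_eventuallyEq ev1
  have dph2 : DifferentiableAt ℝ (pd 2 h) x :=
    (dG2 x hx).congr_of_eventuallyEq ev2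
  -- differentiability of fderiv ℝ h at x
  have dfh : DifferentiableAt ℝ (fderiv ℝ h) x := by
    set G1 : (Fin 3 → ℝ) → ℝ :=
      fun y => v2 y - pd 0 v1 y - v1 y * pd 1 v1 y - v2 y * pd 2 v1 y with hG1
    set G2 : (Fin 3 → ℝ) → ℝ :=
      fun y => -v1 y - pd 0 v2 y - v1 y * pd 1 v2 y - v2 y * pd 2 v2 y with hG2
    set G0 : (Fin 3 → ℝ) → ℝ :=
      fun y => -(h y) * (pd 1 v1 y + pd 2 v2 y) - v1 y * G1 y - v2 y * G2 y with hG0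
    set P : Fin 3 → ((Fin 3 → ℝ) →L[ℝ] ℝ) :=
      fun i => ContinuousLinearMap.proj i with hP
    have dG0 : DifferentiableAt ℝ G0 x :=
      (((dh x hx).neg.mul ((dpv1 1 x hx).add (dpv2 2 x hx))).sub
        ((dv1 x hx).mul (dG1 x hx))).sub ((dv2 x hx).mul (dG2 x hx))
    have evΦ : fderiv ℝ h =ᶠ[𝓝 x]
        (fun y => G0 y • P 0 + G1 y • P 1 + G2 y • P 2) := by
      refine eventually_of_mem memU fun y hy => ?_
      ext w
      rw [clm_rep (fderiv ℝ h y) w]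
      have h0 : fderiv ℝ h y (Pi.single 0 1) = pd 0 h y := rfl
      have h1' : fderiv ℝ h y (Pi.single 1 1) = pd 1 h y := rfl
      have h2' : fderiv ℝ h y (Pi.single 2 1) = pd 2 h y := rfl
      rw [h0, h1', h2', e0 y hy, e1 y hy, e2 y hy]
      simp only [hG0, hG1, hG2, hP, ContinuousLinearMap.add_apply,
        ContinuousLinearMap.smul_apply, ContinuousLinearMap.proj_apply, smul_eq_mul]
      ring
    exact (((dG0.smul_const (P 0)).add ((dG1 x hx).smul_const (P 1))).add
      ((dG2 x hx).smul_const (P 2))).congr_of_eventuallyEq evΦ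
  have dfv1 : DifferentiableAt ℝ (fderiv ℝ v1) x :=
    ((hv1.contDiffAt memU).fderiv_right (m := 1) (by norm_num)).differentiableAt one_ne_zero
  have dfv2 : DifferentiableAt ℝ (fderiv ℝ v2) x :=
    ((hv2.contDiffAt memU).fderiv_right (m := 1) (by norm_num)).differentiableAt one_ne_zero
  have evdh : ∀ᶠ y in 𝓝 x, DifferentiableAt ℝ h y := eventually_of_mem memU dh
  have evdv1 : ∀ᶠ y in 𝓝 x, DifferentiableAt ℝ v1 y := eventually_of_mem memU dv1
  have evdv2 : ∀ᶠ y in 𝓝 x, DifferentiableAt ℝ v2 y := eventually_of_mem memU dv2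
  -- Clairaut symmetry facts
  have SH : pd 1 (pd 2 h) x = pd 2 (pd 1 h) x := pd_clairaut evdh dfh
  have S1 : pd 0 (pd 1 v2) x = pd 1 (pd 0 v2) x := pd_clairaut evdv2 dfv2
  have S2 : pd 0 (pd 2 v1) x = pd 2 (pd 0 v1) x := pd_clairaut evdv1 dfv1
  have S3 : pd 2 (pd 1 v2) x = pd 1 (pd 2 v2) x := pd_clairaut evdv2 dfv2
  have S4 : pd 1 (pd 2 v1) x = pd 2 (pd 1 v1) x := pd_clairaut evdv1 dfv1
  -- differentiate the momentum equations
  have ev02 : pd 0 v2 =ᶠ[𝓝 x]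
      (fun y => -v1 y - pd 2 h y - v1 y * pd 1 v2 y - v2 y * pd 2 v2 y) :=
    eventually_of_mem memU fun y hy => by
      have := hmom2 y hy; unfold matD at this; dsimp only; linarith
  have ev01 : pd 0 v1 =ᶠ[𝓝 x]
      (fun y => v2 y - pd 1 h y - v1 y * pd 1 v1 y - v2 y * pd 2 v1 y) :=
    eventually_of_mem memU fun y hy => by
      have := hmom1 y hy; unfold matD at this; dsimp only; linarith
  have K1 : pd 1 (pd 0 v2) x
      = -pd 1 v1 x - pd 1 (pd 2 h) x
        - (v1 x * pd 1 (pd 1 v2) x + pd 1 v2 x * pd 1 v1 x)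
        - (v2 x * pd 1 (pd 2 v2) x + pd 2 v2 x * pd 1 v2 x) := by
    rw [pd_congr ev02,
      pd_sub ((((dv1 x hx).fun_neg.fun_sub dph2).fun_sub ((dv1 x hx).fun_mul (dpv2 1 x hx))))
        ((dv2 x hx).fun_mul (dpv2 2 x hx)),
      pd_sub ((dv1 x hx).fun_neg.fun_sub dph2) ((dv1 x hx).fun_mul (dpv2 1 x hx)),
      pd_sub (dv1 x hx).fun_neg dph2, pd_neg,
      pd_mul (dv1 x hx) (dpv2 1 x hx), pd_mul (dv2 x hx) (dpv2 2 x hx)]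
  have K2 : pd 2 (pd 0 v1) x
      = pd 2 v2 x - pd 2 (pd 1 h) x
        - (v1 x * pd 2 (pd 1 v1) x + pd 1 v1 x * pd 2 v1 x)
        - (v2 x * pd 2 (pd 2 v1) x + pd 2 v1 x * pd 2 v2 x) := by
    rw [pd_congr ev01,
      pd_sub ((((dv2 x hx).fun_sub dph1).fun_sub ((dv1 x hx).fun_mul (dpv1 1 x hx))))
        ((dv2 x hx).fun_mul (dpv1 2 x hx)),
      pd_sub ((dv2 x hx).fun_sub dph1) ((dv1 x hx).fun_mul (dpv1 1 x hx)),
      pd_sub (dv2 x hx) dph1,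
      pd_mul (dv1 x hx) (dpv1 1 x hx), pd_mul (dv2 x hx) (dpv1 2 x hx)]
  -- expand the derivative of the specific vorticity
  have evζ : (fun y => (pd 1 v2 y - pd 2 v1 y) * Real.exp (-(Real.log (h y))))
      =ᶠ[𝓝 x] (fun y => (pd 1 v2 y - pd 2 v1 y) * (h y)⁻¹) :=
    eventually_of_mem memU fun y hy => by
      dsimp only; rw [Real.exp_neg, Real.exp_log (hpos y hy)]
  have Epd : ∀ i : Fin 3,
      pd i (fun y => (pd 1 v2 y - pd 2 v1 y) * Real.exp (-(Real.log (h y)))) x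
        = (pd i (pd 1 v2) x - pd i (pd 2 v1) x) * (h x)⁻¹
          + (pd 1 v2 x - pd 2 v1 x) * (-(pd i h x) / (h x)^2) := by
    intro i
    rw [pd_congr evζ,
      pd_mul ((dpv2 1 x hx).fun_sub (dpv1 2 x hx)) ((dh x hx).fun_inv hne),
      pd_inv (dh x hx) hne,
      pd_sub (dpv2 1 x hx) (dpv1 2 x hx)]
    ring
  have massx := e0 x hx
  -- final computation
  unfold matD
  rw [Epd 0, Epd 1, Epd 2, Real.exp_neg, Real.exp_log (hpos x hx),
    S1, S2, S3, S4, K1, K2, SH, massx]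
  field_simp
  ring
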